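/- Suppose m ≥ 2. For every ε ∈ (0,1) there exists δ > 0 such that for all a, b ∈ [0, δ), the (N−1)-dimensional Lebesgue volume of the section {(x₂,…,xₙ, y) ∈ ℝⁿ⁻¹ × ℝᵐ : (a·y₁ + b, x₂, …, xₙ, y) ∈ W} equals the iterated integral ∫_{−ε}^{ε} ∫₀^{√(ε²−y₁²)} (m−1)·v_{m−1}·ρ^{m−2}·v₂ₖ·[ (1 − (a·y₁ + b)² + √(ε² − y₁² − ρ²))ᵏ − (1 − (a·y₁ + b)² − √(ε² − y₁² − ρ²))ᵏ ] dρ dy₁. -/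

import Mathlib

open MeasureTheory

/-- The Lebesgue volume of the unit ball in `ℝᵖ`. -/
noncomputable def unitBallVol (p : ℕ) : ℝ :=
  (volume (Metric.closedBall (0 : EuclideanSpace ℝ (Fin p)) 1)).toReal

lemma unitBallVol_nonneg (p : ℕ) : 0 ≤ unitBallVol p := ENNReal.toReal_nonneg

lemma annulus_volume (k : ℕ) (hk : 1 ≤ k) {A B : ℝ} (hA : 0 ≤ A) (hAB : A ≤ B) :
    volume {x : EuclideanSpace ℝ (Fin (2*k)) | A ≤ ‖x‖^2 ∧ ‖x‖^2 ≤ B} =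
      ENNReal.ofReal (unitBallVol (2*k) * (B^k - A^k)) := by
  haveI : Nontrivial (EuclideanSpace ℝ (Fin (2*k))) :=
    Module.nontrivial_of_finrank_pos (R := ℝ) (by rw [finrank_euclideanSpace_fin]; omega)
  have hB : 0 ≤ B := le_trans hA hAB
  have hset : {x : EuclideanSpace ℝ (Fin (2*k)) | A ≤ ‖x‖^2 ∧ ‖x‖^2 ≤ B}
      = Metric.closedBall 0 (Real.sqrt B) \ Metric.ball 0 (Real.sqrt A) := by
    ext x
    simp only [Set.mem_setOf_eq, Set.mem_diff, Metric.mem_closedBall, Metric.mem_ball,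
      dist_zero_right, not_lt]
    constructor
    · rintro ⟨h1, h2⟩
      exact ⟨(Real.le_sqrt (norm_nonneg x) hB).mpr h2, (Real.sqrt_le_left (norm_nonneg x)).mpr h1⟩
    · rintro ⟨h1, h2⟩
      exact ⟨(Real.sqrt_le_left (norm_nonneg x)).mp h2, (Real.le_sqrt (norm_nonneg x) hB).mp h1⟩
  have hVne : volume (Metric.closedBall (0 : EuclideanSpace ℝ (Fin (2*k))) 1) ≠ ⊤ :=
    (IsCompact.measure_ne_top (isCompact_closedBall _ _))
  have hV : volume (Metric.closedBall (0 : EuclideanSpace ℝ (Fin (2*k))) 1)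
      = ENNReal.ofReal (unitBallVol (2*k)) := (ENNReal.ofReal_toReal hVne).symm
  have hpow : ∀ C : ℝ, 0 ≤ C → (Real.sqrt C) ^ (Module.finrank ℝ (EuclideanSpace ℝ (Fin (2*k)))) = C ^ k := by
    intro C hC
    rw [finrank_euclideanSpace_fin, pow_mul, Real.sq_sqrt hC]
  rw [hset, measure_diff
      (Metric.ball_subset_closedBall.trans (Metric.closedBall_subset_closedBall (Real.sqrt_le_sqrt hAB)))
      measurableSet_ball.nullMeasurableSet measure_ball_lt_top.ne,
    Measure.addHaar_closedBall' _ _ (Real.sqrt_nonneg B),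
    ← Measure.addHaar_closedBall_eq_addHaar_ball,
    Measure.addHaar_closedBall' _ _ (Real.sqrt_nonneg A),
    hpow B hB, hpow A hA, hV,
    ← ENNReal.ofReal_mul (pow_nonneg hB k), ← ENNReal.ofReal_mul (pow_nonneg hA k),
    ← ENNReal.ofReal_sub _ (mul_nonneg (pow_nonneg hA k) (unitBallVol_nonneg _))]
  congr 1
  ring

lemma slice_volume (k : ℕ) (hk : 1 ≤ k) {c s : ℝ} (hs0 : 0 ≤ s) (hc : 0 ≤ 1 - c - s) :
    volume {x : EuclideanSpace ℝ (Fin (2 * k)) | (c + ‖x‖ ^ 2 - 1) ^ 2 ≤ s ^ 2} =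
      ENNReal.ofReal (unitBallVol (2 * k) * ((1 - c + s) ^ k - (1 - c - s) ^ k)) := by
  have hset : {x : EuclideanSpace ℝ (Fin (2*k)) | (c + ‖x‖^2 - 1)^2 ≤ s^2}
      = {x : EuclideanSpace ℝ (Fin (2*k)) | 1 - c - s ≤ ‖x‖^2 ∧ ‖x‖^2 ≤ 1 - c + s} := by
    ext x
    simp only [Set.mem_setOf_eq]
    constructor
    · intro h
      have h2 := Real.sqrt_le_sqrt h
      rw [Real.sqrt_sq_eq_abs, Real.sqrt_sq hs0, abs_le] at h2
      constructor <;> linarith [h2.1, h2.2]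
    · rintro ⟨h1, h2⟩
      exact sq_le_sq' (by linarith) (by linarith)
  rw [hset, annulus_volume k hk hc (by linarith)]

set_option maxHeartbeats 2000000 in
open Metric in
theorem section_volume_eq_iterated_integral (k m : ℕ) (hk : 1 ≤ k) (hm : 2 ≤ m)
    (ε : ℝ) (hε : ε ∈ Set.Ioo (0 : ℝ) 1) :
    ∃ δ > (0 : ℝ), ∀ a b : ℝ, a ∈ Set.Ico (0 : ℝ) δ → b ∈ Set.Ico (0 : ℝ) δ →
      (volume {q : EuclideanSpace ℝ (Fin (2 * k)) × EuclideanSpace ℝ (Fin m) |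
          ((a * q.2 ⟨0, by omega⟩ + b) ^ 2 + ‖q.1‖ ^ 2 - 1) ^ 2 + ‖q.2‖ ^ 2 ≤ ε ^ 2}).toReal =
        ∫ y₁ in (-ε)..ε, ∫ ρ in (0 : ℝ)..(Real.sqrt (ε ^ 2 - y₁ ^ 2)),
          ((m : ℝ) - 1) * unitBallVol (m - 1) * ρ ^ (m - 2) * unitBallVol (2 * k) *
            ((1 - (a * y₁ + b) ^ 2 + Real.sqrt (ε ^ 2 - y₁ ^ 2 - ρ ^ 2)) ^ k -
             (1 - (a * y₁ + b) ^ 2 - Real.sqrt (ε ^ 2 - y₁ ^ 2 - ρ ^ 2)) ^ k) := by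
  obtain ⟨hε0, hε1⟩ := hε
  obtain ⟨p, rfl⟩ : ∃ p, m = p + 2 := ⟨m - 2, by omega⟩
  refine ⟨(1 - ε) / 2, by linarith, ?_⟩
  rintro a b ⟨ha0, ha1⟩ ⟨hb0, hb1⟩
  simp only [Fin.zero_eta]
  set Ψ : ℝ → ℝ → ℝ := fun t u => unitBallVol (2 * k) *
    ((1 - (a * t + b) ^ 2 + Real.sqrt (ε ^ 2 - u)) ^ k -
     (1 - (a * t + b) ^ 2 - Real.sqrt (ε ^ 2 - u)) ^ k) with hΨ
  -- key numeric bound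
  have hkey : ∀ t u : ℝ, t ^ 2 ≤ u → u ≤ ε ^ 2 → (a * t + b) ^ 2 ≤ 1 - ε := by
    intro t u htu hu
    have ht : |t| ≤ ε := by
      rw [abs_le]; constructor <;> nlinarith
    have h1 : |a * t + b| ≤ a + b := by
      calc |a * t + b| ≤ |a * t| + |b| := abs_add_le _ _
        _ = a * |t| + b := by rw [abs_mul, abs_of_nonneg ha0, abs_of_nonneg hb0]
        _ ≤ a * 1 + b := by nlinarith [abs_nonneg t]
        _ = a + b := by ring
    have h2 : a + b ≤ 1 - ε := by linarith
    have := abs_nonneg (a * t + b)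
    nlinarith [sq_abs (a * t + b)]
  -- vanishing of Ψ when the argument exceeds ε²
  have hΨ_zero : ∀ t u : ℝ, ¬ u ≤ ε ^ 2 → Ψ t u = 0 := by
    intro t u hu
    rw [hΨ]; dsimp only
    rw [Real.sqrt_eq_zero'.mpr (by linarith)]
    simp
  -- section volume formula
  have claim_sec : ∀ t u : ℝ, t ^ 2 ≤ u →
      volume {x : EuclideanSpace ℝ (Fin (2 * k)) |
        ((a * t + b) ^ 2 + ‖x‖ ^ 2 - 1) ^ 2 + u ≤ ε ^ 2} = ENNReal.ofReal (Ψ t u) := by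
    intro t u htu
    by_cases hu : u ≤ ε ^ 2
    · have htt := hkey t u htu hu
      have hs0 := Real.sqrt_nonneg (ε^2-u)
      have hs2 : Real.sqrt (ε^2-u)^2 = ε^2-u := Real.sq_sqrt (by linarith)
      have hsε : Real.sqrt (ε^2-u) ≤ ε := (Real.sqrt_le_left hε0.le).mpr (by nlinarith)
      have hset : {x : EuclideanSpace ℝ (Fin (2*k)) |
            ((a*t+b)^2 + ‖x‖^2 - 1)^2 + u ≤ ε^2}
          = {x : EuclideanSpace ℝ (Fin (2*k)) |
            ((a*t+b)^2 + ‖x‖^2 - 1)^2 ≤ (Real.sqrt (ε^2-u))^2} := by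
        ext x
        simp only [Set.mem_setOf_eq, hs2]
        constructor <;> intro h <;> linarith
      rw [hset, slice_volume k hk hs0 (by nlinarith)]
    · have hempty : {x : EuclideanSpace ℝ (Fin (2*k)) |
          ((a*t+b)^2 + ‖x‖^2 - 1)^2 + u ≤ ε^2} = ∅ := by
        ext x
        simp only [Set.mem_setOf_eq, Set.mem_empty_iff_false, iff_false, not_le]
        nlinarith [sq_nonneg ((a*t+b)^2 + ‖x‖^2 - 1)]
      rw [hempty, measure_empty, hΨ_zero t u hu]
      simp
  -- nonnegativity of Ψ
  have Ψ_nonneg : ∀ t u : ℝ, t ^ 2 ≤ u → 0 ≤ Ψ t u := by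
    intro t u htu
    by_cases hu : u ≤ ε ^ 2
    · have htt := hkey t u htu hu
      have hs : Real.sqrt (ε^2 - u) ≤ ε :=
        (Real.sqrt_le_left hε0.le).mpr (by nlinarith)
      have hA : (0:ℝ) ≤ 1 - (a*t+b)^2 - Real.sqrt (ε^2 - u) := by nlinarith
      have : (1 - (a*t+b)^2 - Real.sqrt (ε^2-u)) ^ k ≤ (1 - (a*t+b)^2 + Real.sqrt (ε^2-u)) ^ k :=
        pow_le_pow_left₀ hA (by nlinarith [Real.sqrt_nonneg (ε^2-u)]) k
      have := unitBallVol_nonneg (2*k)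
      rw [hΨ]; dsimp only; nlinarith
    · rw [hΨ_zero t u hu]
  -- squared first coordinate is at most the squared norm
  have hnorm : ∀ (n : ℕ) (z : EuclideanSpace ℝ (Fin n)), ‖z‖^2 = ∑ i, (z i)^2 := by
    intro n z
    rw [EuclideanSpace.norm_eq, Real.sq_sqrt (by positivity)]
    congr 1; ext i; rw [Real.norm_eq_abs, sq_abs]
  have coord : ∀ y : EuclideanSpace ℝ (Fin (p+2)), (y 0)^2 ≤ ‖y‖^2 := by
    intro y
    rw [hnorm]
    exact Finset.single_le_sum (f := fun i => (y i)^2) (fun i _ => sq_nonneg _)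
      (Finset.mem_univ 0)
  -- continuity of the section-volume function
  set F : EuclideanSpace ℝ (Fin (p+2)) → ℝ := fun y => Ψ (y 0) (‖y‖^2) with hF
  have h0cont : Continuous fun y : EuclideanSpace ℝ (Fin (p+2)) => (y 0 : ℝ) :=
    (EuclideanSpace.proj (0 : Fin (p+2))).continuous
  have hF_cont : Continuous F := by
    rw [hF, hΨ]
    dsimp only
    have hsq : Continuous fun y : EuclideanSpace ℝ (Fin (p+2)) =>
        Real.sqrt (ε^2 - ‖y‖^2) :=
      Real.continuous_sqrt.comp (continuous_const.sub (continuous_norm.pow 2))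
    have hlin : Continuous fun y : EuclideanSpace ℝ (Fin (p+2)) =>
        (1 - (a * y 0 + b)^2 : ℝ) :=
      continuous_const.sub (((continuous_const.mul h0cont).add continuous_const).pow 2)
    exact continuous_const.mul (((hlin.add hsq).pow k).sub ((hlin.sub hsq).pow k))
  have hF_supp : HasCompactSupport F := by
    apply HasCompactSupport.intro (isCompact_closedBall (0 : EuclideanSpace ℝ (Fin (p+2))) ε)
    intro y hy
    simp only [mem_closedBall, dist_zero_right, not_le] at hy
    exact hΨ_zero _ _ (by nlinarith)
  have hF_int : Integrable F := hF_cont.integrable_of_hasCompactSupport hF_supp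
  -- measurability of the big set
  have hScont : Continuous fun q : EuclideanSpace ℝ (Fin (2*k)) × EuclideanSpace ℝ (Fin (p+2)) =>
      ((a * q.2 0 + b) ^ 2 + ‖q.1‖ ^ 2 - 1) ^ 2 + ‖q.2‖ ^ 2 := by
    have h0 : Continuous fun q : EuclideanSpace ℝ (Fin (2*k)) × EuclideanSpace ℝ (Fin (p+2)) =>
        (q.2 0 : ℝ) := h0cont.comp continuous_snd
    exact (((((continuous_const.mul h0).add continuous_const).pow 2).add
      (continuous_fst.norm.pow 2)).sub continuous_const).pow 2 |>.add (continuous_snd.norm.pow 2)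
  have hSmeas : MeasurableSet {q : EuclideanSpace ℝ (Fin (2*k)) × EuclideanSpace ℝ (Fin (p+2)) |
      ((a * q.2 0 + b) ^ 2 + ‖q.1‖ ^ 2 - 1) ^ 2 + ‖q.2‖ ^ 2 ≤ ε ^ 2} :=
    measurableSet_Iic.preimage hScont.measurable
  -- Fubini: integrate out the x variable
  have step1 : volume {q : EuclideanSpace ℝ (Fin (2*k)) × EuclideanSpace ℝ (Fin (p+2)) |
        ((a * q.2 0 + b) ^ 2 + ‖q.1‖ ^ 2 - 1) ^ 2 + ‖q.2‖ ^ 2 ≤ ε ^ 2}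
      = ∫⁻ y, ENNReal.ofReal (F y) := by
    rw [Measure.volume_eq_prod, Measure.prod_apply_symm hSmeas]
    refine lintegral_congr fun y => ?_
    rw [show (fun x => (x, y)) ⁻¹'
        {q : EuclideanSpace ℝ (Fin (2*k)) × EuclideanSpace ℝ (Fin (p+2)) |
          ((a * q.2 0 + b) ^ 2 + ‖q.1‖ ^ 2 - 1) ^ 2 + ‖q.2‖ ^ 2 ≤ ε ^ 2}
      = {x : EuclideanSpace ℝ (Fin (2*k)) |
          ((a * y 0 + b) ^ 2 + ‖x‖ ^ 2 - 1) ^ 2 + ‖y‖ ^ 2 ≤ ε ^ 2} from rfl]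
    exact claim_sec (y 0) (‖y‖^2) (coord y)
  have step2 : (volume {q : EuclideanSpace ℝ (Fin (2*k)) × EuclideanSpace ℝ (Fin (p+2)) |
        ((a * q.2 0 + b) ^ 2 + ‖q.1‖ ^ 2 - 1) ^ 2 + ‖q.2‖ ^ 2 ≤ ε ^ 2}).toReal
      = ∫ y, F y := by
    rw [step1]
    exact (integral_eq_lintegral_of_nonneg_ae
      (Filter.Eventually.of_forall fun y => Ψ_nonneg _ _ (coord y))
      hF_cont.aestronglyMeasurable).symm
  -- transfer to the plain pi space
  have stepA : (∫ y, F y) = ∫ w : Fin (p+2) → ℝ, Ψ (w 0) (∑ i, (w i)^2) := by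
    rw [← (EuclideanSpace.volume_preserving_symm_measurableEquiv_toLp (Fin (p+2))).integral_comp
      (MeasurableEquiv.measurableEmbedding _) (fun w => Ψ (w 0) (∑ i, (w i)^2))]
    refine integral_congr_ae (Filter.Eventually.of_forall fun y => ?_)
    show Ψ (y 0) (‖y‖^2) = _
    rw [hnorm]
    rfl
  have hint1 : Integrable (fun w : Fin (p+2) → ℝ => Ψ (w 0) (∑ i, (w i)^2)) := by
    have h := ((MeasurePreserving.symm (MeasurableEquiv.toLp 2 (Fin (p+2) → ℝ)).symm
        (EuclideanSpace.volume_preserving_symm_measurableEquiv_toLp (Fin (p+2)))).integrable_comp_emb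
      (MeasurableEquiv.measurableEmbedding _)).mpr hF_int
    refine h.congr (Filter.Eventually.of_forall fun w => ?_)
    show F ((MeasurableEquiv.toLp 2 (Fin (p+2) → ℝ)).symm.symm w) = _
    rw [hF]
    dsimp only
    rw [hnorm]
    rfl
  have stepB : (∫ w : Fin (p+2) → ℝ, Ψ (w 0) (∑ i, (w i)^2))
      = ∫ z : ℝ × (Fin (p+1) → ℝ), Ψ z.1 (z.1^2 + ∑ j, (z.2 j)^2) := by
    rw [← (volume_preserving_piFinSuccAbove (fun _ : Fin (p+2) => ℝ) 0).integral_comp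
      (MeasurableEquiv.measurableEmbedding _) (fun z : ℝ × (Fin (p+1) → ℝ) =>
        Ψ z.1 (z.1^2 + ∑ j, (z.2 j)^2))]
    refine integral_congr_ae (Filter.Eventually.of_forall fun w => ?_)
    show Ψ (w 0) (∑ i, (w i)^2)
      = Ψ (w 0) ((w 0)^2 + ∑ j, (w ((0 : Fin (p+2)).succAbove j))^2)
    rw [Fin.sum_univ_succAbove (fun i => (w i)^2) 0]
  have hins : ∀ z : ℝ × (Fin (p+1) → ℝ),
      Ψ (((MeasurableEquiv.piFinSuccAbove (fun _ : Fin (p+2) => ℝ) 0).symm z) 0)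
        (∑ i, (((MeasurableEquiv.piFinSuccAbove (fun _ : Fin (p+2) => ℝ) 0).symm z) i)^2)
      = Ψ z.1 (z.1^2 + ∑ j, (z.2 j)^2) := by
    intro z
    have h1 : ((MeasurableEquiv.piFinSuccAbove (fun _ : Fin (p+2) => ℝ) 0).symm z)
        = (0 : Fin (p+2)).insertNth z.1 z.2 := rfl
    rw [h1, Fin.sum_univ_succAbove _ (0 : Fin (p+1+1))]
    simp [Fin.insertNth_apply_same, Fin.insertNth_apply_succAbove]
  have hint2 : Integrable (fun z : ℝ × (Fin (p+1) → ℝ) => Ψ z.1 (z.1^2 + ∑ j, (z.2 j)^2)) := by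
    have h := ((MeasurePreserving.symm (MeasurableEquiv.piFinSuccAbove (fun _ : Fin (p+2) => ℝ) 0)
        (volume_preserving_piFinSuccAbove (fun _ : Fin (p+2) => ℝ) 0)).integrable_comp_emb
      (MeasurableEquiv.measurableEmbedding _)).mpr hint1
    exact h.congr (Filter.Eventually.of_forall fun z => hins z)
  have stepC : (∫ z : ℝ × (Fin (p+1) → ℝ), Ψ z.1 (z.1^2 + ∑ j, (z.2 j)^2))
      = ∫ c : ℝ, ∫ g : Fin (p+1) → ℝ, Ψ c (c^2 + ∑ j, (g j)^2) := by
    rw [Measure.volume_eq_prod]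
    exact integral_prod _ (by rwa [← Measure.volume_eq_prod])
  haveI : Nontrivial (EuclideanSpace ℝ (Fin (p+1))) :=
    Module.nontrivial_of_finrank_pos (R := ℝ) (by rw [finrank_euclideanSpace_fin]; omega)
  have hball : (volume (ball (0 : EuclideanSpace ℝ (Fin (p+1))) 1)).toReal = unitBallVol (p+1) := by
    rw [← Measure.addHaar_closedBall_eq_addHaar_ball]
    rfl
  have stepD : ∀ c : ℝ, (∫ g : Fin (p+1) → ℝ, Ψ c (c^2 + ∑ j, (g j)^2))
      = ((p : ℝ) + 1) * (unitBallVol (p+1) *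
        ∫ r in Set.Ioi (0:ℝ), r ^ p * Ψ c (c^2 + r^2)) := by
    intro c
    rw [← (EuclideanSpace.volume_preserving_symm_measurableEquiv_toLp (Fin (p+1))).integral_comp
      (MeasurableEquiv.measurableEmbedding _) (fun g : Fin (p+1) → ℝ => Ψ c (c^2 + ∑ j, (g j)^2))]
    have heq : ∀ z : EuclideanSpace ℝ (Fin (p+1)),
        Ψ c (c^2 + ∑ j, (((MeasurableEquiv.toLp 2 (Fin (p+1) → ℝ)).symm z) j)^2)
        = (fun r : ℝ => Ψ c (c^2 + r^2)) ‖z‖ := by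
      intro z
      dsimp only
      rw [hnorm]
      rfl
    rw [integral_congr_ae (Filter.Eventually.of_forall fun z => heq z),
      MeasureTheory.integral_fun_norm_addHaar volume (fun r : ℝ => Ψ c (c^2 + r^2))]
    simp only [finrank_euclideanSpace_fin, Nat.add_sub_cancel, nsmul_eq_mul, smul_eq_mul, measureReal_def, hball]
    push_cast
    ring_nf
    simp only [add_comm (c ^ 2)]
  have stepE : ∀ c : ℝ, (∫ r in Set.Ioi (0:ℝ), r ^ p * Ψ c (c^2 + r^2))
      = ∫ r in (0:ℝ)..(Real.sqrt (ε^2 - c^2)), r ^ p * Ψ c (c^2 + r^2) := by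
    intro c
    rw [intervalIntegral.integral_of_le (Real.sqrt_nonneg _)]
    refine setIntegral_eq_of_subset_of_forall_diff_eq_zero measurableSet_Ioi
      Set.Ioc_subset_Ioi_self (fun r hr => ?_) |>.symm.symm
    obtain ⟨hr0, hrn⟩ := hr
    simp only [Set.mem_Ioi] at hr0
    simp only [Set.mem_Ioc, not_and, not_le] at hrn
    have hrR := hrn hr0
    have hno : ¬ (c^2 + r^2 ≤ ε^2) := by
      intro hcon
      have h0y : (0:ℝ) ≤ ε^2 - c^2 := by nlinarith
      have h1 : r ≤ Real.sqrt (ε^2 - c^2) := (Real.le_sqrt hr0.le h0y).mpr (by linarith)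
      linarith
    rw [hΨ_zero _ _ hno, mul_zero]
  set RHSf : ℝ → ℝ := fun c => ((p : ℝ) + 1) * (unitBallVol (p+1) *
      ∫ r in (0:ℝ)..(Real.sqrt (ε^2 - c^2)), r ^ p * Ψ c (c^2 + r^2)) with hRHSf
  have stepF : (∫ c : ℝ, ∫ g : Fin (p+1) → ℝ, Ψ c (c^2 + ∑ j, (g j)^2)) = ∫ c : ℝ, RHSf c := by
    refine integral_congr_ae (Filter.Eventually.of_forall fun c => ?_)
    show (∫ g : Fin (p+1) → ℝ, Ψ c (c^2 + ∑ j, (g j)^2)) = RHSf c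
    rw [hRHSf]
    dsimp only
    rw [stepD c, stepE c]
  have stepG : (∫ c : ℝ, RHSf c) = ∫ c in (-ε)..ε, RHSf c := by
    rw [intervalIntegral.integral_of_le (by linarith : -ε ≤ ε)]
    refine (setIntegral_eq_integral_of_forall_compl_eq_zero fun c hc => ?_).symm
    simp only [Set.mem_Ioc, not_and, not_le] at hc
    have hc2 : ε^2 - c^2 ≤ 0 := by
      rcases le_or_gt c (-ε) with h | h
      · nlinarith
      · have := hc h
        nlinarith
    have hzero : Real.sqrt (ε^2 - c^2) = 0 := Real.sqrt_eq_zero'.mpr hc2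
    rw [hRHSf]
    dsimp only
    rw [hzero, intervalIntegral.integral_same, mul_zero, mul_zero]
  rw [step2, stepA, stepB, stepC, stepF, stepG]
  refine intervalIntegral.integral_congr fun c hc => ?_
  rw [hRHSf]
  dsimp only
  rw [← intervalIntegral.integral_const_mul, ← intervalIntegral.integral_const_mul]
  refine intervalIntegral.integral_congr fun r hr => ?_
  rw [hΨ]
  dsimp only
  rw [show ε^2 - (c^2 + r^2) = ε^2 - c^2 - r^2 by ring]
  rw [show p + 2 - 1 = p + 1 from rfl, show p + 2 - 2 = p from rfl]
  push_cast
  ring
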